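/- Let $d \ge 3$ and $c > 0$. Let $G$ be a bipartite graph with parts $A$ and $B$, $|A|, |B| \le n/2$, minimum degree $\delta \ge c n^{1-1/d}$, and let $x \in B$. Then $\sum_{y \in B \setminus \{x\}} \binom{|N(x) \cap N(y)|}{d} \ge c' \cdot |N(x)|^d$ for some constant $c' > 0$ depending only on $c$ and $d$, for all sufficiently large $n$. -/

import Mathlib

set_option maxHeartbeats 1000000


open Finset

/-- Neighborhood in `A` of a vertex `b` of the second part. -/
def nbrA {α β : Type} [DecidableEq α] (E : α → β → Prop) [∀ a b, Decidable (E a b)]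
    (A : Finset α) (b : β) : Finset α := A.filter (fun a => E a b)

/-- Neighborhood in `B` of a vertex `a` of the first part. -/
def nbrB {α β : Type} [DecidableEq β] (E : α → β → Prop) [∀ a b, Decidable (E a b)]
    (B : Finset β) (a : α) : Finset β := B.filter (fun b => E a b)

/-- Common neighborhood in `B` of a set `T` of vertices of the first part. -/
def commonNbr {α β : Type} [DecidableEq β] (E : α → β → Prop) [∀ a b, Decidable (E a b)]
    (B : Finset β) (T : Finset α) : Finset β := B.filter (fun b => ∀ a ∈ T, E a b)

/-- Number of edges of the bipartite graph with parts `A`, `B` and adjacency `E`. -/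
def edgeCount {α β : Type} (E : α → β → Prop) [∀ a b, Decidable (E a b)]
    (A : Finset α) (B : Finset β) : ℕ := ((A ×ˢ B).filter (fun p => E p.1 p.2)).card

/-- `K_{k,k}`-freeness of the bipartite graph with parts `A`, `B` and adjacency `E`. -/
def KFree {α β : Type} (E : α → β → Prop) (A : Finset α) (B : Finset β) (k : ℕ) : Prop :=
  ¬ ∃ S ⊆ A, ∃ T ⊆ B, S.card = k ∧ T.card = k ∧ ∀ a ∈ S, ∀ b ∈ T, E a b

/-- `Z ⊆ A` is shattered by the neighborhoods of the vertices of `B`. -/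
def Shatters {α β : Type} [DecidableEq α] (E : α → β → Prop) [∀ a b, Decidable (E a b)]
    (A : Finset α) (B : Finset β) (Z : Finset α) : Prop :=
  ∀ S ⊆ Z, ∃ b ∈ B, nbrA E A b ∩ Z = S

/-- The VC-dimension of the bipartite graph `(A,B,E)` with respect to `A` is at most `d`. -/
def VCdimLE {α β : Type} [DecidableEq α] (E : α → β → Prop) [∀ a b, Decidable (E a b)]
    (A : Finset α) (B : Finset β) (d : ℕ) : Prop :=
  ∀ Z ⊆ A, Shatters E A B Z → Z.card ≤ d

/-- Let `d ≥ 3`, `c > 0`. In a bipartite graph with parts of size at most `n/2` and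
minimum degree `δ ≥ c n^{1-1/d}`, for every `x ∈ B` we have
`∑_{y ∈ B \ {x}} C(|N(x) ∩ N(y)|, d) ≥ c' |N(x)|^d`, for large `n`. -/
theorem stmt_8 (d : ℕ) (hd : 3 ≤ d) (c : ℝ) (hc : 0 < c) :
    ∃ c' : ℝ, 0 < c' ∧ ∃ n₀ : ℕ, ∀ n ≥ n₀,
      ∀ (α β : Type) [DecidableEq α] [DecidableEq β]
        (E : α → β → Prop) [∀ a b, Decidable (E a b)] (A : Finset α) (B : Finset β)
        (δ : ℕ),
        (A.card : ℝ) ≤ n / 2 → (B.card : ℝ) ≤ n / 2 →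
        c * (n : ℝ) ^ (1 - 1 / (d : ℝ)) ≤ (δ : ℝ) →
        (∀ a ∈ A, δ ≤ (nbrB E B a).card) → (∀ b ∈ B, δ ≤ (nbrA E A b).card) →
        ∀ x ∈ B,
          c' * ((nbrA E A x).card : ℝ) ^ d
            ≤ ∑ y ∈ B.erase x, (((nbrA E A x ∩ nbrA E A y).card.choose d : ℕ) : ℝ) := by
  have hd3 : (3:ℝ) ≤ (d:ℝ) := by exact_mod_cast hd
  have hdpos : (0:ℝ) < d := by linarith
  have hfacpos : (0:ℝ) < (d.factorial : ℝ) := by exact_mod_cast d.factorial_pos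
  set K : ℝ := max (2 * (d:ℝ) / c ^ 2) 1 with hKdef
  have hK1 : (1:ℝ) ≤ K := le_max_right _ _
  have hK0 : (0:ℝ) ≤ K := by linarith
  refine ⟨c ^ d / (2 * d.factorial), by positivity, ⌈K ^ (3:ℕ)⌉₊ + 1, ?_⟩
  intro n hn α β _ _ E _ A B δ hA hB hδ hdegA hdegB x hx
  -- basic facts about n
  have hn1 : (1:ℝ) ≤ (n:ℝ) := by
    have : 1 ≤ n := le_trans (by omega) hn
    exact_mod_cast this
  have hn0 : (0:ℝ) < (n:ℝ) := by linarith
  have hKn3 : K ^ (3:ℕ) ≤ (n:ℝ) := by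
    refine le_trans (Nat.le_ceil _) ?_
    have : (⌈K ^ (3:ℕ)⌉₊ : ℝ) ≤ (n:ℝ) := by exact_mod_cast le_trans (by omega) hn
    exact this
  set r : ℝ := 1 - 2 / (d:ℝ) with hrdef
  have h13 : (1:ℝ)/3 ≤ r := by
    have h1 : 2 / (d:ℝ) ≤ 2 / 3 := by
      rw [div_le_div_iff₀ hdpos (by norm_num)]; linarith
    rw [hrdef]; linarith
  have hKr : K ≤ (n:ℝ) ^ r := by
    have h1 : K ≤ (n:ℝ) ^ ((1:ℝ)/3) := by
      have h2 : K = (K ^ (3:ℕ)) ^ ((1:ℝ)/3) := by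
        rw [← Real.rpow_natCast K 3, ← Real.rpow_mul hK0]; norm_num
      rw [h2]
      exact Real.rpow_le_rpow (by positivity) hKn3 (by norm_num)
    exact le_trans h1 (Real.rpow_le_rpow_of_exponent_le hn1 h13)
  have hcd : 2 * (d:ℝ) ≤ c ^ 2 * (n:ℝ) ^ r := by
    have h1 : 2 * (d:ℝ) / c ^ 2 ≤ (n:ℝ) ^ r := le_trans (le_max_left _ _) hKr
    rw [div_le_iff₀ (by positivity)] at h1
    linarith
  -- δ and N(x)
  have hrp : (0:ℝ) < (n:ℝ) ^ ((1:ℝ) - 1 / (d:ℝ)) := Real.rpow_pos_of_pos hn0 _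
  have hδ0 : (0:ℝ) < (δ:ℝ) := lt_of_lt_of_le (by positivity) hδ
  set N : Finset α := nbrA E A x with hNdef
  have hNA : N ⊆ A := Finset.filter_subset _ _
  set R : ℝ := (N.card : ℝ) with hRdef
  have hδR : (δ:ℝ) ≤ R := by rw [hRdef]; exact_mod_cast hdegB x hx
  have hR0 : (0:ℝ) < R := lt_of_lt_of_le hδ0 hδR
  have hRn : R ≤ (n:ℝ) / 2 := by
    refine le_trans ?_ hA
    rw [hRdef]
    exact_mod_cast Finset.card_le_card hNA
  -- edge counting
  have hstep1 : N.card * δ ≤ ∑ y ∈ B, (N ∩ nbrA E A y).card := by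
    have hfil : ∀ y, N ∩ nbrA E A y = N.filter (fun a => E a y) := by
      intro y
      rw [nbrA, Finset.inter_filter, Finset.inter_eq_left.2 hNA]
    calc N.card * δ = ∑ _a ∈ N, δ := by rw [Finset.sum_const, smul_eq_mul]
      _ ≤ ∑ a ∈ N, (nbrB E B a).card :=
          Finset.sum_le_sum fun a ha => hdegA a (hNA ha)
      _ = ∑ a ∈ N, ∑ y ∈ B, (if E a y then 1 else 0) := by
          refine Finset.sum_congr rfl fun a _ => ?_
          rw [nbrB, Finset.card_filter]
      _ = ∑ y ∈ B, ∑ a ∈ N, (if E a y then 1 else 0) := Finset.sum_comm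
      _ = ∑ y ∈ B, (N ∩ nbrA E A y).card := by
          refine Finset.sum_congr rfl fun y _ => ?_
          rw [hfil y, Finset.card_filter]
  have hmx : (N ∩ nbrA E A x).card = N.card := by rw [← hNdef, Finset.inter_self]
  have hstep2 : N.card * δ ≤ (∑ y ∈ B.erase x, (N ∩ nbrA E A y).card) + N.card := by
    have hsea : (∑ y ∈ B.erase x, (N ∩ nbrA E A y).card) + (N ∩ nbrA E A x).card
        = ∑ y ∈ B, (N ∩ nbrA E A y).card :=
      Finset.sum_erase_add B (fun y => (N ∩ nbrA E A y).card) hx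
    rw [hmx] at hsea
    omega
  -- the auxiliary function f
  set f : β → ℝ := fun y => (((N ∩ nbrA E A y).card + 1 - d : ℕ) : ℝ) with hfdef
  have hf0 : ∀ y ∈ B.erase x, 0 ≤ f y := fun y _ => Nat.cast_nonneg _
  have hflb : ∀ y, ((N ∩ nbrA E A y).card : ℝ) - (d:ℝ) ≤ f y := by
    intro y
    set a := (N ∩ nbrA E A y).card
    have h1 : a + 1 ≤ a + 1 - d + d := le_tsub_add
    have h2 : ((a + 1 : ℕ) : ℝ) ≤ ((a + 1 - d : ℕ) : ℝ) + (d:ℝ) := by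
      exact_mod_cast h1
    push_cast at h2
    simp only [hfdef]
    linarith
  have hfpow : ∀ y, f y ^ d ≤ (d.factorial : ℝ) * (((N ∩ nbrA E A y).card.choose d : ℕ) : ℝ) := by
    intro y
    set a := (N ∩ nbrA E A y).card
    have h1 : (a + 1 - d) ^ d ≤ a.descFactorial d := Nat.pow_sub_le_descFactorial a d
    rw [Nat.descFactorial_eq_factorial_mul_choose] at h1
    simp only [hfdef]
    exact_mod_cast h1
  -- lower bound for the sum of f
  have htn : (((B.erase x).card : ℝ)) ≤ (n:ℝ) / 2 := by
    refine le_trans ?_ hB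
    exact_mod_cast Finset.card_erase_le
  have hSδsq : 2 * (n:ℝ) * (d:ℝ) ≤ R * (δ:ℝ) := by
    have hmul : (c * (n:ℝ) ^ ((1:ℝ) - 1/(d:ℝ))) * (c * (n:ℝ) ^ ((1:ℝ) - 1/(d:ℝ)))
        ≤ (δ:ℝ) * (δ:ℝ) := mul_le_mul hδ hδ (by positivity) (le_of_lt hδ0)
    have hpow : (n:ℝ) ^ ((1:ℝ) - 1/(d:ℝ)) * (n:ℝ) ^ ((1:ℝ) - 1/(d:ℝ)) = (n:ℝ) * (n:ℝ) ^ r := by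
      rw [← Real.rpow_add hn0]
      nth_rewrite 2 [show (n:ℝ) = (n:ℝ) ^ (1:ℝ) by rw [Real.rpow_one]]
      rw [← Real.rpow_add hn0]
      congr 1
      rw [hrdef]; ring
    have h2 : c ^ 2 * ((n:ℝ) * (n:ℝ) ^ r) ≤ (δ:ℝ) * (δ:ℝ) := by nlinarith [hmul, hpow]
    have h3 : 2 * (n:ℝ) * (d:ℝ) ≤ c ^ 2 * ((n:ℝ) * (n:ℝ) ^ r) := by nlinarith [hcd, hn0]
    have h4 : (δ:ℝ) * (δ:ℝ) ≤ R * (δ:ℝ) := mul_le_mul_of_nonneg_right hδR (le_of_lt hδ0)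
    linarith
  have hfsumlb : R * (δ:ℝ) / 2 ≤ ∑ y ∈ B.erase x, f y := by
    have hA1 : ∑ y ∈ B.erase x, (((N ∩ nbrA E A y).card : ℝ) - (d:ℝ))
        ≤ ∑ y ∈ B.erase x, f y := Finset.sum_le_sum fun y _ => hflb y
    rw [Finset.sum_sub_distrib, Finset.sum_const, nsmul_eq_mul] at hA1
    have hcastsum : R * (δ:ℝ) ≤ (∑ y ∈ B.erase x, ((N ∩ nbrA E A y).card : ℝ)) + R := by
      rw [hRdef]
      exact_mod_cast hstep2
    nlinarith [hA1, hcastsum, htn, hSδsq, hRn, hd3, hn0]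
  have htpos : (0:ℝ) < ((B.erase x).card : ℝ) := by
    rcases Finset.eq_empty_or_nonempty (B.erase x) with h | h
    · exfalso
      rw [h, Finset.sum_empty] at hfsumlb
      nlinarith [hR0, hδ0]
    · exact_mod_cast h.card_pos
  -- Jensen
  have he : d - 1 + 1 = d := by omega
  have jensen : (∑ y ∈ B.erase x, f y) ^ d / ((B.erase x).card : ℝ) ^ (d - 1)
      ≤ ∑ y ∈ B.erase x, f y ^ d := by
    have := pow_sum_div_card_le_sum_pow hf0 (d - 1)
    rwa [he] at this
  -- the key rpow identity
  have hkey : c ^ d * (n:ℝ) ^ (d - 1) ≤ (δ:ℝ) ^ d := by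
    have hX : ((n:ℝ) ^ ((1:ℝ) - 1/(d:ℝ))) ^ d = (n:ℝ) ^ (d - 1) := by
      rw [← Real.rpow_natCast ((n:ℝ) ^ ((1:ℝ) - 1/(d:ℝ))) d, ← Real.rpow_mul (le_of_lt hn0),
        ← Real.rpow_natCast (n:ℝ) (d - 1)]
      congr 1
      rw [Nat.cast_sub (by omega : 1 ≤ d)]
      have hdne : (d:ℝ) ≠ 0 := ne_of_gt hdpos
      field_simp
      norm_num
    calc c ^ d * (n:ℝ) ^ (d - 1) = (c * (n:ℝ) ^ ((1:ℝ) - 1/(d:ℝ))) ^ d := by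
          rw [mul_pow, hX]
      _ ≤ (δ:ℝ) ^ d := pow_le_pow_left₀ (by positivity) hδ d
  have h2d : (2:ℝ) ^ d = 2 * 2 ^ (d - 1) := by
    conv_lhs => rw [← he]
    rw [pow_succ]; ring
  -- final chain
  set t : ℝ := ((B.erase x).card : ℝ)
  have hsumpow : ∑ y ∈ B.erase x, f y ^ d
      ≤ (d.factorial : ℝ) * ∑ y ∈ B.erase x, (((N ∩ nbrA E A y).card.choose d : ℕ) : ℝ) := by
    rw [Finset.mul_sum]
    exact Finset.sum_le_sum fun y _ => hfpow y
  calc c ^ d / (2 * (d.factorial : ℝ)) * R ^ d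
      ≤ (R * (δ:ℝ) / 2) ^ d / (((n:ℝ)/2) ^ (d - 1) * (d.factorial : ℝ)) := by
        rw [le_div_iff₀ (by positivity)]
        have hexp : (R * (δ:ℝ) / 2) ^ d = R ^ d * (δ:ℝ) ^ d / (2 * 2 ^ (d-1)) := by
          rw [div_pow, mul_pow, h2d]
        have hexp2 : ((n:ℝ)/2) ^ (d-1) = (n:ℝ) ^ (d-1) / 2 ^ (d-1) := div_pow _ _ _
        rw [hexp, hexp2]
        calc c ^ d / (2 * (d.factorial : ℝ)) * R ^ d * ((n:ℝ) ^ (d-1) / 2 ^ (d-1) * (d.factorial : ℝ))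
            = (c ^ d * (n:ℝ) ^ (d-1)) * (R ^ d / (2 * 2 ^ (d-1))) := by
              field_simp
          _ ≤ (δ:ℝ) ^ d * (R ^ d / (2 * 2 ^ (d-1))) :=
              mul_le_mul_of_nonneg_right hkey (by positivity)
          _ = R ^ d * (δ:ℝ) ^ d / (2 * 2 ^ (d-1)) := by ring
    _ ≤ (R * (δ:ℝ) / 2) ^ d / (t ^ (d - 1) * (d.factorial : ℝ)) := by
        gcongr <;> first | positivity | exact htn
    _ ≤ (∑ y ∈ B.erase x, f y) ^ d / (t ^ (d - 1) * (d.factorial : ℝ)) := by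
        gcongr <;> first | positivity | exact hfsumlb
    _ = ((∑ y ∈ B.erase x, f y) ^ d / t ^ (d - 1)) / (d.factorial : ℝ) := by
        rw [div_div]
    _ ≤ (∑ y ∈ B.erase x, f y ^ d) / (d.factorial : ℝ) := by
        gcongr
    _ ≤ ((d.factorial : ℝ) * ∑ y ∈ B.erase x, (((N ∩ nbrA E A y).card.choose d : ℕ) : ℝ))
          / (d.factorial : ℝ) := by gcongr
    _ = ∑ y ∈ B.erase x, (((N ∩ nbrA E A y).card.choose d : ℕ) : ℝ) := by
        field_simp
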